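/- arXiv:1008.5046 — 4 statements merged into one kernel-verified Lean document; each statement's English description precedes it below -/
import Mathlib

section
/- For every positive integer r, ∑_{k=0}^{r−1} (−1)^k π^{2k} ζ(2r−2k)/(2k+1)! = (−1)^{r−1} r · π^{2r}/(2r+1)!. -/
open Real

/-- The Riemann zeta function at natural arguments `s > 1`, as a real series. -/
noncomputable def zetaR (s : ℕ) : ℝ := ∑' n : ℕ, 1 / (n + 1 : ℝ) ^ s

private lemma zetaR_even {m : ℕ} (hm : m ≠ 0) :
    zetaR (2 * m) = (-1 : ℝ) ^ (m + 1) * 2 ^ (2 * m - 1) * π ^ (2 * m) *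
      (bernoulli (2 * m) : ℝ) / (Nat.factorial (2 * m)) := by
  have h := hasSum_zeta_nat hm
  have h1 : HasSum (fun n : ℕ => 1 / ((n + 1 : ℕ) : ℝ) ^ (2 * m))
      ((-1 : ℝ) ^ (m + 1) * (2 : ℝ) ^ (2 * m - 1) * π ^ (2 * m) *
        bernoulli (2 * m) / (Nat.factorial (2 * m))) := by
    refine (hasSum_nat_add_iff (f := fun n : ℕ => 1 / (n : ℝ) ^ (2 * m)) 1).mpr ?_
    simpa [zero_pow (by positivity : 2 * m ≠ 0)] using h
  have h2 : zetaR (2 * m) = ∑' n : ℕ, 1 / ((n + 1 : ℕ) : ℝ) ^ (2 * m) := by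
    unfold zetaR; push_cast; rfl
  rw [h2, h1.tsum_eq]

private lemma bern_half {k : ℕ} (hk : k ≠ 0) :
    (Polynomial.bernoulli (2 * k + 1)).eval (1 / 2 : ℚ) = 0 := by
  have hx : (1 / 2 : ℝ) ∈ Set.Icc (0 : ℝ) 1 := by norm_num
  have h := hasSum_one_div_nat_pow_mul_sin hk hx
  have hzero : (fun n : ℕ => 1 / (n : ℝ) ^ (2 * k + 1) * Real.sin (2 * π * n * (1 / 2)))
      = fun _ : ℕ => (0 : ℝ) := by
    funext n
    have : (2 : ℝ) * π * n * (1 / 2) = n * π := by ring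
    rw [this, Real.sin_nat_mul_pi, mul_zero]
  rw [hzero] at h
  have h0 := h.unique hasSum_zero
  have hc : ((-1 : ℝ) ^ (k + 1) * (2 * π) ^ (2 * k + 1) / 2 / (Nat.factorial (2 * k + 1))) ≠ 0 := by
    have := Real.pi_ne_zero
    positivity
  have heval : (Polynomial.map (algebraMap ℚ ℝ) (Polynomial.bernoulli (2 * k + 1))).eval
      (1 / 2 : ℝ) = 0 := by
    rcases mul_eq_zero.mp h0 with h' | h'
    · exact absurd h' hc
    · exact h'
  rw [show (1 / 2 : ℝ) = algebraMap ℚ ℝ (1 / 2 : ℚ) by norm_num,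
    Polynomial.eval_map, Polynomial.eval₂_at_apply] at heval
  rw [eq_ratCast] at heval
  exact_mod_cast heval

private lemma sum_bern_two_pow (r : ℕ) (hr : 0 < r) :
    ∑ i ∈ Finset.range (2 * r + 2),
      (bernoulli i : ℚ) * ((2 * r + 1).choose i) * 2 ^ i = 0 := by
  have h : (Polynomial.bernoulli (2 * r + 1)).eval (1 / 2 : ℚ) = 0 := bern_half hr.ne'
  rw [Polynomial.bernoulli, Polynomial.eval_finset_sum] at h
  simp only [Polynomial.eval_monomial] at h
  have key : ∑ i ∈ Finset.range (2 * r + 2), (bernoulli i : ℚ) * ((2 * r + 1).choose i) * 2 ^ i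
      = 2 ^ (2 * r + 1) * ∑ i ∈ Finset.range (2 * r + 1 + 1),
          bernoulli i * ((2 * r + 1).choose i) * (1 / 2 : ℚ) ^ (2 * r + 1 - i) := by
    rw [Finset.mul_sum]
    refine Finset.sum_congr rfl fun i hi => ?_
    rw [Finset.mem_range] at hi
    have h2 : (2 : ℚ) ^ (2 * r + 1) = 2 ^ (2 * r + 1 - i) * 2 ^ i := by
      rw [← pow_add]; congr 1; omega
    rw [h2]
    have h3 : (1 / 2 : ℚ) ^ (2 * r + 1 - i) * 2 ^ (2 * r + 1 - i) = 1 := by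
      rw [← mul_pow]; norm_num
    calc bernoulli i * ((2 * r + 1).choose i) * 2 ^ i
        = ((1 / 2 : ℚ) ^ (2 * r + 1 - i) * 2 ^ (2 * r + 1 - i)) *
            (bernoulli i * ((2 * r + 1).choose i) * 2 ^ i) := by rw [h3, one_mul]
      _ = 2 ^ (2 * r + 1 - i) * 2 ^ i *
            (bernoulli i * ↑((2 * r + 1).choose i) * (1 / 2) ^ (2 * r + 1 - i)) := by ring
  rw [key, h, mul_zero]

private lemma sum_range_double (m : ℕ) (f : ℕ → ℚ) :
    ∑ i ∈ Finset.range (2 * m), f i = ∑ j ∈ Finset.range m, (f (2 * j) + f (2 * j + 1)) := by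
  induction m with
  | zero => simp
  | succ n ih =>
    rw [show 2 * (n + 1) = 2 * n + 1 + 1 by ring, Finset.sum_range_succ, Finset.sum_range_succ,
      Finset.sum_range_succ, ih]
    ring

private lemma bernoulli_odd (j : ℕ) : bernoulli (2 * j + 3) = 0 := by
  rw [bernoulli_eq_bernoulli'_of_ne_one (by omega)]
  exact bernoulli'_eq_zero_of_odd ⟨j + 1, by ring⟩ (by omega)

private lemma key_sum (r : ℕ) (hr : 0 < r) :
    ∑ j ∈ Finset.range r,
      (bernoulli (2 * j + 2) : ℚ) * ((2 * r + 1).choose (2 * j + 2)) * 2 ^ (2 * j + 2)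
      = 2 * r := by
  have h := sum_bern_two_pow r hr
  rw [show 2 * r + 2 = 2 * (r + 1) by ring, sum_range_double, Finset.sum_add_distrib] at h
  have hodd : ∑ j ∈ Finset.range (r + 1),
      (bernoulli (2 * j + 1) : ℚ) * ((2 * r + 1).choose (2 * j + 1)) * 2 ^ (2 * j + 1)
      = -(2 * r + 1) := by
    rw [Finset.sum_range_succ']
    have : ∀ j ∈ Finset.range r,
        (bernoulli (2 * (j + 1) + 1) : ℚ) * ((2 * r + 1).choose (2 * (j + 1) + 1))
          * 2 ^ (2 * (j + 1) + 1) = 0 := by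
      intro j _
      rw [show 2 * (j + 1) + 1 = 2 * j + 3 by ring, bernoulli_odd, zero_mul, zero_mul]
    rw [Finset.sum_congr rfl this, Finset.sum_const_zero, zero_add]
    norm_num [bernoulli_one]
    ring
  have heven : ∑ j ∈ Finset.range (r + 1),
      (bernoulli (2 * j) : ℚ) * ((2 * r + 1).choose (2 * j)) * 2 ^ (2 * j)
      = (∑ j ∈ Finset.range r,
          (bernoulli (2 * j + 2) : ℚ) * ((2 * r + 1).choose (2 * j + 2)) * 2 ^ (2 * j + 2)) + 1 := by
    rw [Finset.sum_range_succ']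
    norm_num [bernoulli_zero]
    exact Finset.sum_congr rfl fun j _ => by rw [show 2 * (j + 1) = 2 * j + 2 by ring]
  rw [hodd, heven] at h
  linarith

private lemma key_sum' (r : ℕ) (hr : 0 < r) :
    ∑ k ∈ Finset.range r, (2 : ℚ) ^ (2 * (r - k) - 1) * bernoulli (2 * (r - k)) /
      (Nat.factorial (2 * k + 1) * Nat.factorial (2 * (r - k)))
      = r / Nat.factorial (2 * r + 1) := by
  rw [← Finset.sum_range_reflect]
  have hterm : ∀ j ∈ Finset.range r,
      (2 : ℚ) ^ (2 * (r - (r - 1 - j)) - 1) * bernoulli (2 * (r - (r - 1 - j))) /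
        (Nat.factorial (2 * (r - 1 - j) + 1) * Nat.factorial (2 * (r - (r - 1 - j))))
      = (bernoulli (2 * j + 2) : ℚ) * ((2 * r + 1).choose (2 * j + 2)) * 2 ^ (2 * j + 2) /
          (2 * Nat.factorial (2 * r + 1)) := by
    intro j hj
    rw [Finset.mem_range] at hj
    have h1 : r - (r - 1 - j) = j + 1 := by omega
    have h2 : 2 * (r - 1 - j) + 1 = 2 * r + 1 - (2 * j + 2) := by omega
    rw [h1, h2]
    have hfac : ((2 * r + 1).factorial : ℚ)
        = ((2 * r + 1).choose (2 * j + 2) : ℚ) * (2 * j + 2).factorial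
            * (2 * r + 1 - (2 * j + 2)).factorial := by
      exact_mod_cast (Nat.choose_mul_factorial_mul_factorial (by omega : 2 * j + 2 ≤ 2 * r + 1)).symm
    have hne1 : ((2 * r + 1 - (2 * j + 2)).factorial : ℚ) ≠ 0 := by
      exact_mod_cast (Nat.factorial_pos _).ne'
    have hne2 : ((2 * j + 2).factorial : ℚ) ≠ 0 := by
      exact_mod_cast (Nat.factorial_pos _).ne'
    have h3 : 2 * (j + 1) - 1 = 2 * j + 1 := by omega
    have h4 : 2 * (j + 1) = 2 * j + 2 := by omega
    have hne3 : (((2 * r + 1).choose (2 * j + 2)) : ℚ) ≠ 0 := by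
      exact_mod_cast (Nat.choose_pos (by omega : 2 * j + 2 ≤ 2 * r + 1)).ne'
    rw [h3, h4, hfac]
    field_simp
    ring
  rw [Finset.sum_congr rfl hterm, ← Finset.sum_div, key_sum r hr]
  have hne : ((2 * r + 1).factorial : ℚ) ≠ 0 := by
    exact_mod_cast (Nat.factorial_pos _).ne'
  field_simp

theorem stmt_4 (r : ℕ) (hr : 0 < r) :
    ∑ k ∈ Finset.range r,
        (-1 : ℝ) ^ k * π ^ (2 * k) * zetaR (2 * r - 2 * k) / (Nat.factorial (2 * k + 1))
      = (-1 : ℝ) ^ (r - 1) * r * π ^ (2 * r) / (Nat.factorial (2 * r + 1)) := by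
  have hterm : ∀ k ∈ Finset.range r,
      (-1 : ℝ) ^ k * π ^ (2 * k) * zetaR (2 * r - 2 * k) / (Nat.factorial (2 * k + 1))
      = ((-1 : ℝ) ^ (r - 1) * π ^ (2 * r)) *
          ((2 : ℝ) ^ (2 * (r - k) - 1) * (bernoulli (2 * (r - k)) : ℝ) /
            (Nat.factorial (2 * k + 1) * Nat.factorial (2 * (r - k)))) := by
    intro k hk
    rw [Finset.mem_range] at hk
    rw [show 2 * r - 2 * k = 2 * (r - k) by omega, zetaR_even (by omega)]
    have h2 : (-1 : ℝ) ^ k * (-1 : ℝ) ^ (r - k + 1) = (-1 : ℝ) ^ (r - 1) := by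
      rw [← pow_add, show k + (r - k + 1) = (r - 1) + 2 by omega, pow_add]
      norm_num
    have h3 : π ^ (2 * k) * π ^ (2 * (r - k)) = π ^ (2 * r) := by
      rw [← pow_add]; congr 1; omega
    calc (-1 : ℝ) ^ k * π ^ (2 * k) *
          ((-1 : ℝ) ^ (r - k + 1) * 2 ^ (2 * (r - k) - 1) * π ^ (2 * (r - k)) *
            (bernoulli (2 * (r - k)) : ℝ) / (Nat.factorial (2 * (r - k)))) /
          (Nat.factorial (2 * k + 1))
        = ((-1 : ℝ) ^ k * (-1 : ℝ) ^ (r - k + 1)) * (π ^ (2 * k) * π ^ (2 * (r - k))) *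
            ((2 : ℝ) ^ (2 * (r - k) - 1) * (bernoulli (2 * (r - k)) : ℝ) /
              (Nat.factorial (2 * k + 1) * Nat.factorial (2 * (r - k)))) := by
          ring
      _ = _ := by rw [h2, h3]
  rw [Finset.sum_congr rfl hterm, ← Finset.mul_sum]
  have hq := key_sum' r hr
  have hcast := congrArg (fun q : ℚ => (q : ℝ)) hq
  push_cast at hcast
  rw [hcast]
  ring
end

section
/- For every positive integer r, ∑_{k=0}^{r−1} (−1)^k (2π)^{2k} ζ(2r−2k)/(2k+1)! = (−1)^{r−1} (2r−1) (2π)^{2r}/(4·(2r+1)!). -/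
open Real

lemma zetaR_two_mul {m : ℕ} (hm : m ≠ 0) :
    zetaR (2 * m) = (-1 : ℝ) ^ (m + 1) * (2 : ℝ) ^ (2 * m - 1) * π ^ (2 * m) *
      (bernoulli (2 * m) : ℝ) / (2 * m).factorial := by
  have h := hasSum_zeta_nat hm
  have h2 : HasSum (fun n : ℕ => 1 / ((n : ℝ) + 1) ^ (2 * m))
      ((-1 : ℝ) ^ (m + 1) * (2 : ℝ) ^ (2 * m - 1) * π ^ (2 * m) *
        (bernoulli (2 * m) : ℝ) / (2 * m).factorial) := by
    have h3 := (hasSum_nat_add_iff' (f := fun n : ℕ => 1 / (n : ℝ) ^ (2 * m)) 1).mpr h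
    simp only [Finset.range_one, Finset.sum_singleton, Nat.cast_zero] at h3
    rw [zero_pow (by positivity), one_div, inv_zero, sub_zero] at h3
    convert h3 using 2 with n
    · rfl
    push_cast
    ring
  exact h2.tsum_eq

lemma even_vanish_sum (g : ℕ → ℚ) (hg : ∀ i, Odd i → g i = 0) (r : ℕ) :
    ∑ i ∈ Finset.range (2 * r + 1), g i = ∑ m ∈ Finset.range (r + 1), g (2 * m) := by
  induction r with
  | zero => simp
  | succ r ih =>
      have h1 : 2 * (r + 1) + 1 = (2 * r + 1) + 1 + 1 := by ring
      have h2 : 2 * (r + 1) = 2 * r + 2 := by ring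
      rw [h1, Finset.sum_range_succ, Finset.sum_range_succ, ih, hg (2 * r + 1) ⟨r, by ring⟩,
        add_zero, Finset.sum_range_succ (fun m => g (2 * m)) (r + 1), h2]

lemma key_bernoulli (r : ℕ) (hr : 0 < r) :
    ∑ k ∈ Finset.range r, ((2 * r + 1).choose (2 * k + 2) : ℚ) * bernoulli (2 * k + 2)
      = (2 * r - 1) / 2 := by
  have h0 := sum_bernoulli (2 * r + 1)
  rw [if_neg (by omega)] at h0
  have h1 : 2 * r + 1 = (2 * r - 1) + 1 + 1 := by omega
  rw [h1, Finset.sum_range_succ', Finset.sum_range_succ'] at h0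
  rw [← h1] at h0
  set g : ℕ → ℚ := fun i => ((2 * r + 1).choose (i + 2) : ℚ) * bernoulli (i + 2) with hgdef
  have hodd : ∀ i, Odd i → g i = 0 := by
    intro i hi
    have h3 : Odd (i + 2) := by rcases hi with ⟨j, hj⟩; exact ⟨j + 1, by omega⟩
    have h4 : bernoulli (i + 2) = 0 := by
      rw [bernoulli_eq_bernoulli'_of_ne_one (by omega)]
      exact bernoulli'_eq_zero_of_odd h3 (by omega)
    simp [hgdef, h4]
  have h3 : ∑ i ∈ Finset.range (2 * r - 1), g i = ∑ m ∈ Finset.range r, g (2 * m) := by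
    have h2 : 2 * r - 1 = 2 * (r - 1) + 1 := by omega
    rw [h2, even_vanish_sum g hodd (r - 1), Nat.sub_add_cancel hr]
  have h4 : ∀ i ∈ Finset.range (2 * r - 1),
      ((2 * r + 1).choose (i + 1 + 1) : ℚ) * bernoulli (i + 1 + 1) = g i := fun i _ => rfl
  rw [Finset.sum_congr rfl h4, h3] at h0
  have h5 : ∑ m ∈ Finset.range r, g (2 * m)
      = ∑ k ∈ Finset.range r, ((2 * r + 1).choose (2 * k + 2) : ℚ) * bernoulli (2 * k + 2) := rfl
  rw [h5] at h0
  simp only [Nat.choose_one_right, Nat.choose_zero_right, bernoulli_one, bernoulli_zero,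
    Nat.cast_one, one_mul, mul_one, zero_add] at h0
  push_cast at h0
  linarith

lemma term_eq (r : ℕ) (hr : 0 < r) (k : ℕ) (hk : k < r) :
    (-1 : ℝ) ^ k * (2 * π) ^ (2 * k) * zetaR (2 * r - 2 * k) / (Nat.factorial (2 * k + 1))
      = (-1 : ℝ) ^ (r - 1) * (2 * π) ^ (2 * r) / (2 * (Nat.factorial (2 * r + 1))) *
        (((2 * r + 1).choose (2 * (r - 1 - k) + 2) : ℝ) *
          (bernoulli (2 * (r - 1 - k) + 2) : ℝ)) := by
  set m := r - k with hm
  have hm0 : m ≠ 0 := by omega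
  have e1 : 2 * r - 2 * k = 2 * m := by omega
  have e2 : 2 * (r - 1 - k) + 2 = 2 * m := by omega
  rw [e1, e2, zetaR_two_mul hm0]
  have hfac : ((2 * r + 1).factorial : ℝ)
      = ((2 * r + 1).choose (2 * m) : ℝ) * (2 * m).factorial * (2 * k + 1).factorial := by
    have h := Nat.choose_mul_factorial_mul_factorial (n := 2 * r + 1) (k := 2 * m) (by omega)
    have e3 : 2 * r + 1 - 2 * m = 2 * k + 1 := by omega
    rw [e3] at h
    exact_mod_cast h.symm
  have hs : (-1 : ℝ) ^ (r - 1) = (-1 : ℝ) ^ k * (-1 : ℝ) ^ (m + 1) := by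
    rw [← pow_add]
    have : k + (m + 1) = (r - 1) + 2 := by omega
    rw [this, pow_add]
    norm_num
  have hp : (2 * π : ℝ) ^ (2 * r)
      = (2 * π) ^ (2 * k) * ((2:ℝ) ^ (2 * m - 1) * 2) * π ^ (2 * m) := by
    have h4 : 2 * m - 1 + 1 = 2 * m := by omega
    have h5 : (2:ℝ) ^ (2 * m - 1) * 2 = 2 ^ (2 * m) := by rw [← pow_succ, h4]
    have h6 : 2 * r = 2 * k + 2 * m := by omega
    rw [h5, h6, pow_add, mul_pow]
    ring
  rw [hfac, hs, hp]
  have n1 : ((2 * m).factorial : ℝ) ≠ 0 := by positivity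
  have n2 : ((2 * k + 1).factorial : ℝ) ≠ 0 := by positivity
  have n3 : (((2 * r + 1).choose (2 * m) : ℕ) : ℝ) ≠ 0 := by
    exact_mod_cast (Nat.choose_pos (by omega : 2 * m ≤ 2 * r + 1)).ne'
  field_simp

theorem stmt_5 (r : ℕ) (hr : 0 < r) :
    ∑ k ∈ Finset.range r,
        (-1 : ℝ) ^ k * (2 * π) ^ (2 * k) * zetaR (2 * r - 2 * k) / (Nat.factorial (2 * k + 1))
      = (-1 : ℝ) ^ (r - 1) * (2 * r - 1) * (2 * π) ^ (2 * r) /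
          (4 * (Nat.factorial (2 * r + 1))) := by
  set G : ℕ → ℝ := fun j => ((2 * r + 1).choose (2 * j + 2) : ℝ) * (bernoulli (2 * j + 2) : ℝ)
    with hG
  have h1 : ∑ k ∈ Finset.range r,
      (-1 : ℝ) ^ k * (2 * π) ^ (2 * k) * zetaR (2 * r - 2 * k) / (Nat.factorial (2 * k + 1))
      = ∑ k ∈ Finset.range r,
        (-1 : ℝ) ^ (r - 1) * (2 * π) ^ (2 * r) / (2 * (Nat.factorial (2 * r + 1))) *
          G (r - 1 - k) := by
    refine Finset.sum_congr rfl fun k hk => ?_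
    exact term_eq r hr k (Finset.mem_range.mp hk)
  rw [h1, ← Finset.mul_sum, Finset.sum_range_reflect G r]
  have h2 : ∑ j ∈ Finset.range r, G j = (2 * (r : ℝ) - 1) / 2 := by
    have h3 := key_bernoulli r hr
    have h4 : ((∑ k ∈ Finset.range r,
        ((2 * r + 1).choose (2 * k + 2) : ℚ) * bernoulli (2 * k + 2) : ℚ) : ℝ)
        = ((2 * (r : ℚ) - 1) / 2 : ℚ) := by exact_mod_cast congrArg (Rat.cast (K := ℝ)) h3
    push_cast at h4
    exact h4
  rw [h2]
  have n1 : ((2 * r + 1).factorial : ℝ) ≠ 0 := by positivity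
  field_simp
  ring
end

section
/- For every positive integer r, ∑_{k=0}^{r−1} (−1)^k π^{2k} η(2r−2k)/(2k+1)! = (−1)^{r−1} π^{2r}/(2·(2r+1)!). -/
open Real

/-- The Dirichlet eta function at natural arguments, as a real series. -/
noncomputable def etaR (s : ℕ) : ℝ := ∑' n : ℕ, (-1 : ℝ) ^ n / (n + 1 : ℝ) ^ s

open PowerSeries Polynomial Nat

noncomputable def Pps : PowerSeries ℚ :=
  PowerSeries.mk fun n => Polynomial.aeval (1/2 : ℚ) ((1 / n ! : ℚ) • Polynomial.bernoulli n)

noncomputable def Vps : PowerSeries ℚ := PowerSeries.rescale 2 Pps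

lemma coeff_Vps (n : ℕ) :
    PowerSeries.coeff (R := ℚ) n Vps = 2 ^ n / n ! * (Polynomial.bernoulli n).eval (1/2 : ℚ) := by
  simp only [Vps, Pps, PowerSeries.coeff_rescale, PowerSeries.coeff_mk, Polynomial.aeval_def]
  rw [show Polynomial.eval₂ (algebraMap ℚ ℚ) (1/2:ℚ) ((1 / (n ! : ℚ)) • Polynomial.bernoulli n)
      = Polynomial.eval (1/2:ℚ) ((1 / (n ! : ℚ)) • Polynomial.bernoulli n) from rfl,
    Polynomial.eval_smul, smul_eq_mul]
  ring

lemma Vps_mul :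
    Vps * (PowerSeries.exp ℚ - PowerSeries.rescale (-1) (PowerSeries.exp ℚ))
      = 2 * PowerSeries.X := by
  have h0 := Polynomial.bernoulli_generating_function (1/2 : ℚ)
  have h1 : Vps * (PowerSeries.rescale 2 (PowerSeries.exp ℚ) - 1)
      = PowerSeries.rescale 2 (PowerSeries.X * PowerSeries.rescale (1/2) (PowerSeries.exp ℚ)) := by
    rw [show Vps * (PowerSeries.rescale 2 (PowerSeries.exp ℚ) - 1)
        = PowerSeries.rescale 2 (Pps * (PowerSeries.exp ℚ - 1)) by
      rw [map_mul, map_sub, map_one, Vps], Pps, h0]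
  rw [map_mul, PowerSeries.rescale_rescale] at h1
  norm_num at h1
  rw [show (PowerSeries.C (R := ℚ)) 2 = (2:ℚ⟦X⟧) from map_ofNat _ 2] at h1
  set N := PowerSeries.rescale (-1:ℚ) (PowerSeries.exp ℚ) with hN
  have hexpN : PowerSeries.exp ℚ * N = 1 := PowerSeries.exp_mul_exp_neg_eq_one
  have h2 : PowerSeries.rescale (2:ℚ) (PowerSeries.exp ℚ) = PowerSeries.exp ℚ ^ 2 := by
    rw [PowerSeries.exp_pow_eq_rescale_exp]; norm_num
  have key : PowerSeries.exp ℚ - N = N * (PowerSeries.rescale 2 (PowerSeries.exp ℚ) - 1) := by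
    rw [h2, mul_sub, mul_one, pow_two, ← mul_assoc, mul_comm N, hexpN, one_mul]
  calc Vps * (PowerSeries.exp ℚ - N)
      = N * (Vps * (PowerSeries.rescale 2 (PowerSeries.exp ℚ) - 1)) := by rw [key]; ring
    _ = N * (2 * PowerSeries.X * PowerSeries.exp ℚ) := by rw [h1]
    _ = 2 * PowerSeries.X * (PowerSeries.exp ℚ * N) := by ring
    _ = 2 * PowerSeries.X := by rw [hexpN, mul_one]

lemma sum_range_two_mul (n : ℕ) (f : ℕ → ℚ) :
    ∑ i ∈ Finset.range (2*n), f i = ∑ k ∈ Finset.range n, (f (2*k) + f (2*k+1)) := by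
  induction n with
  | zero => simp
  | succ n ih =>
      rw [Finset.sum_range_succ, ← ih, show 2*(n+1) = (2*n+1)+1 by ring,
        Finset.sum_range_succ, Finset.sum_range_succ]
      ring

lemma key_rat (r : ℕ) (hr : 0 < r) :
    ∑ k ∈ Finset.range r,
        (4:ℚ)^(r-k) * (Polynomial.bernoulli (2*(r-k))).eval (1/2:ℚ)
          / ((2*k+1)! * (2*(r-k))!)
      = -1 / (2*r+1)! := by
  set D := PowerSeries.exp ℚ - PowerSeries.rescale (-1) (PowerSeries.exp ℚ) with hDdef
  have hD : ∀ j : ℕ, PowerSeries.coeff (R := ℚ) j D = (1 - (-1)^j) / j ! := by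
    intro j
    simp [hDdef, PowerSeries.coeff_rescale, PowerSeries.coeff_exp]
    ring
  have hco := congrArg (PowerSeries.coeff (R := ℚ) (2*r+1)) Vps_mul
  rw [PowerSeries.coeff_mul, Finset.Nat.sum_antidiagonal_eq_sum_range_succ_mk] at hco
  have hrhs : PowerSeries.coeff (R := ℚ) (2*r+1) (2 * PowerSeries.X) = 0 := by
    rw [show (2:ℚ⟦X⟧) = PowerSeries.C (R := ℚ) 2 from (map_ofNat _ 2).symm,
      PowerSeries.coeff_C_mul, PowerSeries.coeff_X, if_neg (by omega)]
    simp
  rw [hrhs, show (2*r+1).succ = 2*(r+1) by omega, sum_range_two_mul] at hco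
  set G : ℕ → ℚ := fun m => 2 * ((4:ℚ)^m * (Polynomial.bernoulli (2*m)).eval (1/2:ℚ)
      / ((2*m)! * (2*(r-m)+1)!)) with hGdef
  have hsum : ∑ k ∈ Finset.range (r+1), G k = 0 := by
    rw [← hco]
    apply Finset.sum_congr rfl
    intro k hk
    have hkr : k ≤ r := by simpa using Nat.lt_succ_iff.mp (Finset.mem_range.mp hk)
    have e1 : 2*r+1 - 2*k = 2*(r-k)+1 := by omega
    have e2 : 2*r+1 - (2*k+1) = 2*(r-k) := by omega
    rw [e1, e2, coeff_Vps, hD, hD, Even.neg_one_pow (even_two_mul _),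
      Odd.neg_one_pow ⟨r-k, by ring⟩]
    simp only [sub_self, zero_div, mul_zero, add_zero, hGdef]
    rw [show ((4:ℚ))^k = 2^(2*k) by rw [pow_mul]; norm_num]
    push_cast
    ring
  rw [Finset.sum_range_succ'] at hsum
  have hG0 : G 0 = 2 / (2*r+1)! := by
    simp [hGdef, Polynomial.bernoulli_zero]
    ring
  have hrefl : ∑ k ∈ Finset.range r, G (r - k)
      = ∑ k ∈ Finset.range r, G (k + 1) := by
    have := Finset.sum_range_reflect (fun i => G (i + 1)) r
    rw [← this]
    apply Finset.sum_congr rfl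
    intro k hk
    have : k < r := Finset.mem_range.mp hk
    congr 1
    omega
  have htar : ∑ k ∈ Finset.range r,
      (4:ℚ)^(r-k) * (Polynomial.bernoulli (2*(r-k))).eval (1/2:ℚ)
        / ((2*k+1)! * (2*(r-k))!) = (1/2) * ∑ k ∈ Finset.range r, G (r - k) := by
    rw [Finset.mul_sum]
    apply Finset.sum_congr rfl
    intro k hk
    have hkr : k < r := Finset.mem_range.mp hk
    have : r - (r - k) = k := by omega
    rw [hGdef]
    simp only [this]
    ring
  rw [htar, hrefl]
  have : ∑ k ∈ Finset.range r, G (k+1) = -G 0 := by linarith [hsum]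
  rw [this, hG0]
  ring

lemma etaR_two_mul (m : ℕ) (hm : m ≠ 0) :
    etaR (2*m) = (-1:ℝ)^m * (2*π)^(2*m) / (2*(2*m)!)
      * (((Polynomial.bernoulli (2*m)).eval (1/2:ℚ) : ℚ) : ℝ) := by
  have h := hasSum_one_div_nat_pow_mul_cos hm (x := (1/2 : ℝ)) ⟨by norm_num, by norm_num⟩
  set C : ℝ := (-1 : ℝ) ^ (m + 1) * (2 * π) ^ (2 * m) / 2 / (2 * m)! *
        (Polynomial.map (algebraMap ℚ ℝ) (Polynomial.bernoulli (2 * m))).eval (1/2 : ℝ) with hC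
  set f : ℕ → ℝ := fun n => (-1:ℝ)^n / (n:ℝ)^(2*m) with hf
  have h2 : HasSum f C := by
    refine HasSum.congr_fun h ?_
    intro n
    have : 2 * π * n * (1/2) = (n:ℝ) * π - 0 := by ring
    rw [this, Real.cos_nat_mul_pi_sub, Real.cos_zero, hf]
    ring
  have hf0 : f 0 = 0 := by
    rw [hf]
    simp [zero_pow (Nat.mul_ne_zero two_ne_zero hm)]
  have h3 : HasSum (fun n => f (n+1)) C := by
    refine (hasSum_nat_add_iff 1).mpr ?_
    simpa [hf0] using h2
  have h4 : HasSum (fun n : ℕ => -((-1:ℝ)^n / ((n:ℝ)+1)^(2*m))) C := by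
    refine HasSum.congr_fun h3 ?_
    intro n
    rw [hf]
    push_cast
    ring
  have h5 := h4.neg
  simp only [neg_neg] at h5
  have heta : etaR (2*m) = -C := by
    rw [etaR]
    exact h5.tsum_eq
  rw [heta, hC, Polynomial.eval_map, show (1/2:ℝ) = algebraMap ℚ ℝ (1/2) by norm_num,
    Polynomial.eval₂_at_apply, eq_ratCast]
  ring

theorem stmt_6 (r : ℕ) (hr : 0 < r) :
    ∑ k ∈ Finset.range r,
        (-1 : ℝ) ^ k * π ^ (2 * k) * etaR (2 * r - 2 * k) / (Nat.factorial (2 * k + 1))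
      = (-1 : ℝ) ^ (r - 1) * π ^ (2 * r) / (2 * (Nat.factorial (2 * r + 1))) := by
  have hstep : ∑ k ∈ Finset.range r,
        (-1 : ℝ) ^ k * π ^ (2 * k) * etaR (2 * r - 2 * k) / (Nat.factorial (2 * k + 1))
      = ∑ k ∈ Finset.range r, ((-1:ℝ)^r * π^(2*r) / 2) *
          ((((4:ℚ)^(r-k) * (Polynomial.bernoulli (2*(r-k))).eval (1/2:ℚ)
            / ((2*k+1)! * (2*(r-k))!)) : ℚ) : ℝ) := by
    apply Finset.sum_congr rfl
    intro k hk
    have hkr : k < r := Finset.mem_range.mp hk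
    rw [show 2*r - 2*k = 2*(r-k) by omega, etaR_two_mul (r-k) (by omega)]
    have e1 : (-1:ℝ)^k * (-1:ℝ)^(r-k) = (-1:ℝ)^r := by rw [← pow_add]; congr 1; omega
    have e2 : (π:ℝ)^(2*k) * π^(2*(r-k)) = π^(2*r) := by rw [← pow_add]; congr 1; omega
    have e3 : ((2:ℝ)*π)^(2*(r-k)) = 4^(r-k) * π^(2*(r-k)) := by
      rw [mul_pow, pow_mul]; norm_num
    set Q : ℝ := (((Polynomial.bernoulli (2*(r-k))).eval (1/2:ℚ) : ℚ) : ℝ) with hQ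
    calc (-1:ℝ)^k * π^(2*k) * ((-1:ℝ)^(r-k) * (2*π)^(2*(r-k)) / (2*(2*(r-k))!) * Q)
          / ((2*k+1)! : ℕ)
        = ((-1:ℝ)^k * (-1:ℝ)^(r-k)) * (π^(2*k) * π^(2*(r-k))) * ((4:ℝ)^(r-k) * Q)
            / (2 * (2*(r-k))! * (2*k+1)!) := by rw [e3]; ring
      _ = (-1:ℝ)^r * π^(2*r) * ((4:ℝ)^(r-k) * Q) / (2 * (2*(r-k))! * (2*k+1)!) := by
            rw [e1, e2]
      _ = ((-1:ℝ)^r * π^(2*r) / 2) *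
          ((((4:ℚ)^(r-k) * (Polynomial.bernoulli (2*(r-k))).eval (1/2:ℚ)
            / ((2*k+1)! * (2*(r-k))!)) : ℚ) : ℝ) := by push_cast; ring
  rw [hstep, ← Finset.mul_sum, ← Rat.cast_sum, key_rat r hr]
  have : (-1:ℝ)^r = -(-1:ℝ)^(r-1) := by
    conv_lhs => rw [show r = (r-1)+1 by omega]
    rw [pow_succ]
    ring
  rw [this]
  push_cast
  field_simp
end

section
/- The series ∑_{n=1}^∞ (−1)^{⌊n/2⌋}/(2n−1)^6 converges to √2 · 361π⁶/491520. -/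
open Real

lemma bern5 : bernoulli' 5 = 0 := by
  rw [bernoulli'_def]
  norm_num [Finset.sum_range_succ, bernoulli'_zero, bernoulli'_one, bernoulli'_two,
    bernoulli'_three, bernoulli'_four, Nat.choose]

lemma bern6 : bernoulli' 6 = 1/42 := by
  rw [bernoulli'_def]
  norm_num [Finset.sum_range_succ, bernoulli'_zero, bernoulli'_one, bernoulli'_two,
    bernoulli'_three, bernoulli'_four, bern5, Nat.choose]

lemma beval8 : (Polynomial.map (algebraMap ℚ ℝ) (Polynomial.bernoulli 6)).eval (1/8 : ℝ)
    = 90941/5505024 := by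
  rw [Polynomial.bernoulli]
  norm_num [Finset.sum_range_succ, Polynomial.eval_monomial, bernoulli_one,
    bernoulli_eq_bernoulli'_of_ne_one, bernoulli'_zero, bernoulli'_two, bernoulli'_three,
    bernoulli'_four, bern5, bern6, Nat.choose]

lemma beval4 : (Polynomial.map (algebraMap ℚ ℝ) (Polynomial.bernoulli 6)).eval (1/4 : ℝ)
    = -31/86016 := by
  rw [Polynomial.bernoulli]
  norm_num [Finset.sum_range_succ, Polynomial.eval_monomial, bernoulli_one,
    bernoulli_eq_bernoulli'_of_ne_one, bernoulli'_zero, bernoulli'_two, bernoulli'_three,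
    bernoulli'_four, bern5, bern6, Nat.choose]

lemma coskey (n : ℕ) :
    Real.cos (2 * π * (2 * (n : ℝ) + 1) * (1/8)) = Real.sqrt 2 / 2 * (-1 : ℝ) ^ ((n + 1) / 2) := by
  have hq : n = 4 * (n / 4) + n % 4 := (Nat.div_add_mod n 4).symm.trans (by ring)
  set q := n / 4
  have hr : n % 4 < 4 := Nat.mod_lt _ (by norm_num)
  set r := n % 4 with hrdef
  have hdiv : (4 * q + r + 1) / 2 = 2 * q + (r + 1) / 2 := by omega
  rw [hq, hdiv]
  have hpow : ((-1 : ℝ)) ^ (2 * q + (r + 1) / 2) = (-1 : ℝ) ^ ((r + 1) / 2) := by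
    rw [pow_add, pow_mul]; norm_num
  rw [hpow]
  interval_cases r
  · have : 2 * π * (2 * ((4 * q + 0 : ℕ) : ℝ) + 1) * (1/8) = π/4 + q * (2 * π) := by
      push_cast; ring
    rw [this, Real.cos_add_nat_mul_two_pi, Real.cos_pi_div_four]
    norm_num
  · have : 2 * π * (2 * ((4 * q + 1 : ℕ) : ℝ) + 1) * (1/8) = (π - π/4) + q * (2 * π) := by
      push_cast; ring
    rw [this, Real.cos_add_nat_mul_two_pi, Real.cos_pi_sub, Real.cos_pi_div_four]
    norm_num
  · have : 2 * π * (2 * ((4 * q + 2 : ℕ) : ℝ) + 1) * (1/8) = (π/4 + π) + q * (2 * π) := by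
      push_cast; ring
    rw [this, Real.cos_add_nat_mul_two_pi, Real.cos_add_pi, Real.cos_pi_div_four]
    norm_num
  · have : 2 * π * (2 * ((4 * q + 3 : ℕ) : ℝ) + 1) * (1/8) = (2 * π - π/4) + q * (2 * π) := by
      push_cast; ring
    rw [this, Real.cos_add_nat_mul_two_pi, Real.cos_two_pi_sub, Real.cos_pi_div_four]
    norm_num

theorem stmt_19 :
    HasSum (fun n : ℕ => (-1 : ℝ) ^ ((n + 1) / 2) / (2 * (n + 1 : ℝ) - 1) ^ 6)
      (Real.sqrt 2 * (361 * π ^ 6) / 491520) := by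
  have h8 := hasSum_one_div_nat_pow_mul_cos (k := 3) (by norm_num)
    (x := 1/8) ⟨by norm_num, by norm_num⟩
  have h4 := hasSum_one_div_nat_pow_mul_cos (k := 3) (by norm_num)
    (x := 1/4) ⟨by norm_num, by norm_num⟩
  rw [beval8] at h8
  rw [beval4] at h4
  set f : ℕ → ℝ := fun n => 1 / (n : ℝ) ^ (2 * 3) * Real.cos (2 * π * n * (1/8)) with hf
  set A : ℝ := (-1 : ℝ) ^ (3 + 1) * (2 * π) ^ (2 * 3) / 2 / ((2 * 3).factorial : ℝ) * (90941/5505024) with hA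
  set B : ℝ := (-1 : ℝ) ^ (3 + 1) * (2 * π) ^ (2 * 3) / 2 / ((2 * 3).factorial : ℝ) * (-31/86016) with hB
  have heven : HasSum (fun k : ℕ => f (2 * k)) ((1/64) * B) := by
    have heq : (fun k : ℕ => f (2 * k))
        = fun k : ℕ => (1/64) * (1 / (k : ℝ) ^ (2 * 3) * Real.cos (2 * π * k * (1/4))) := by
      funext k
      simp only [hf]
      have h : 2 * π * ((2 * k : ℕ) : ℝ) * (1/8) = 2 * π * k * (1/4) := by push_cast; ring
      rw [h]
      push_cast
      ring
    rw [heq]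
    exact h4.mul_left _
  have hso : Summable (fun k : ℕ => f (2 * k + 1)) :=
    h8.summable.comp_injective (fun a b h => by omega)
  obtain ⟨c, hc⟩ := hso
  have htot := heven.even_add_odd hc
  have hcval : c = A - (1/64) * B := by
    have := htot.unique h8
    linarith
  rw [hcval] at hc
  have hfin := hc.mul_left (Real.sqrt 2)
  have heq2 : (fun n : ℕ => Real.sqrt 2 * f (2 * n + 1))
      = fun n : ℕ => (-1 : ℝ) ^ ((n + 1) / 2) / (2 * (n + 1 : ℝ) - 1) ^ 6 := by
    funext n
    simp only [hf]
    have harg : 2 * π * ((2 * n + 1 : ℕ) : ℝ) * (1/8) = 2 * π * (2 * (n : ℝ) + 1) * (1/8) := by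
      push_cast; ring
    rw [harg, coskey]
    have h2 : Real.sqrt 2 * (Real.sqrt 2 / 2) = 1 := by
      rw [← Real.mul_self_sqrt (by norm_num : (0:ℝ) ≤ 2)] ; ring_nf
      rw [Real.sq_sqrt] <;> norm_num
    have hden : ((2 * n + 1 : ℕ) : ℝ) = 2 * (n + 1 : ℝ) - 1 := by push_cast; ring
    rw [hden]
    calc Real.sqrt 2 * (1 / (2 * (n + 1 : ℝ) - 1) ^ (2 * 3) * (Real.sqrt 2 / 2 * (-1) ^ ((n + 1) / 2)))
        = Real.sqrt 2 * (Real.sqrt 2 / 2) * ((-1) ^ ((n + 1) / 2) / (2 * (n + 1 : ℝ) - 1) ^ 6) := by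
          ring
      _ = (-1 : ℝ) ^ ((n + 1) / 2) / (2 * (n + 1 : ℝ) - 1) ^ 6 := by rw [h2]; ring
  rw [heq2] at hfin
  convert hfin using 1
  · rfl
  rw [hA, hB]
  have hfact : (((2 * 3).factorial : ℕ) : ℝ) = 720 := by norm_num [Nat.factorial]
  rw [hfact]
  ring
end
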